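/- Let φ be an LTL∨PSL formula and let I be the set of subformulae of φ of the form s ≼ s'. Then φ is SLTL-satisfiable if and only if there exists a partition D = (I⁺, I⁻) of I such that the formula φ_D is SLTL-satisfiable. -/

import Mathlib

/-! ### SLTL: syntax, models, satisfaction -/

inductive SForm : Type where
  | var : ℕ → SForm
  | le : ℕ → ℕ → SForm
  | tru : SForm
  | fls : SForm
  | neg : SForm → SForm
  | conj : SForm → SForm → SForm
  | dia : ℕ → SForm → SForm
  | box : ℕ → SForm → SForm
  | next : SForm → SForm
  | until_ : SForm → SForm → SForm

/-- Traces: ω-sequences of propositional valuations. -/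
abbrev Trace := ℕ → Set ℕ

/-- An SLTL model `(Π, λ)`; standpoint symbols are natural numbers, `0` is the
universal standpoint `*`. -/
structure SLTLModel where
  Pi : Set Trace
  lam : ℕ → Set Trace
  pi_nonempty : Pi.Nonempty
  lam_sub : ∀ s, lam s ⊆ Pi
  lam_nonempty : ∀ s, (lam s).Nonempty
  lam_star : lam 0 = Pi

def SSat (M : SLTLModel) : SForm → Trace → ℕ → Prop
  | .var p, σ, i => p ∈ σ i
  | .le s s', _, _ => M.lam s ⊆ M.lam s'
  | .tru, _, _ => True
  | .fls, _, _ => False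
  | .neg a, σ, i => ¬ SSat M a σ i
  | .conj a b, σ, i => SSat M a σ i ∧ SSat M b σ i
  | .dia s a, _, i => ∃ σ' ∈ M.lam s, SSat M a σ' i
  | .box s a, _, i => ∀ σ' ∈ M.lam s, SSat M a σ' i
  | .next a, σ, i => SSat M a σ (i + 1)
  | .until_ a b, σ, i =>
      ∃ i', i ≤ i' ∧ SSat M b σ i' ∧ ∀ i'', i ≤ i'' → i'' < i' → SSat M a σ i''

def SLTLSatisfiable (φ : SForm) : Prop :=
  ∃ M : SLTLModel, ∃ σ ∈ M.Pi, SSat M φ σ 0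

def SForm.impl (a b : SForm) : SForm := .neg (.conj a (.neg b))
def SForm.iffc (a b : SForm) : SForm := .conj (a.impl b) (b.impl a)
/-- `G φ := ¬(⊤ U ¬φ)`. -/
def SForm.G (a : SForm) : SForm := .neg (.until_ .tru (.neg a))
def bigAnd (l : List SForm) : SForm := l.foldr .conj .tru
/-- The list `[a, a+1, …, b]`. -/
def listIcc (a b : ℕ) : List ℕ := (List.range (b + 1 - a)).map (fun k => a + k)

/-- Propositional variables occurring in a formula. -/
def varsSF : SForm → Finset ℕ
  | .var p => {p}
  | .le _ _ => ∅
  | .tru => ∅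
  | .fls => ∅
  | .neg a => varsSF a
  | .conj a b => varsSF a ∪ varsSF b
  | .dia _ a => varsSF a
  | .box _ a => varsSF a
  | .next a => varsSF a
  | .until_ a b => varsSF a ∪ varsSF b

/-- Standpoint symbols occurring in a formula. -/
def standsSF : SForm → Finset ℕ
  | .var _ => ∅
  | .le s s' => {s, s'}
  | .tru => ∅
  | .fls => ∅
  | .neg a => standsSF a
  | .conj a b => standsSF a ∪ standsSF b
  | .dia s a => insert s (standsSF a)
  | .box s a => insert s (standsSF a)
  | .next a => standsSF a
  | .until_ a b => standsSF a ∪ standsSF b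

/-- No temporal connective (`X` or `U`) occurs in the formula. -/
def noTemp : SForm → Prop
  | .neg a => noTemp a
  | .conj a b => noTemp a ∧ noTemp b
  | .dia _ a => noTemp a
  | .box _ a => noTemp a
  | .next _ => False
  | .until_ _ _ => False
  | _ => True

/-- The fragment LTL∨PSL: no temporal connective occurs within the scope of a
standpoint modality. -/
def isLTLPSL : SForm → Prop
  | .neg a => isLTLPSL a
  | .conj a b => isLTLPSL a ∧ isLTLPSL b
  | .dia _ a => noTemp a
  | .box _ a => noTemp a
  | .next a => isLTLPSL a
  | .until_ a b => isLTLPSL a ∧ isLTLPSL b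
  | _ => True

def sizeSF : SForm → ℕ
  | .var _ => 1
  | .le _ _ => 1
  | .tru => 1
  | .fls => 1
  | .neg a => sizeSF a + 1
  | .conj a b => sizeSF a + sizeSF b + 1
  | .dia _ a => sizeSF a + 1
  | .box _ a => sizeSF a + 1
  | .next a => sizeSF a + 1
  | .until_ a b => sizeSF a + sizeSF b + 1

/-! ### The formula `φ_D` for a partition `D = (I⁺, I⁻)` of the `≼`-subformulae -/

/-- The pairs `(s, s')` such that `s ≼ s'` is a subformula of the given formula. -/
def leSubs : SForm → Finset (ℕ × ℕ)
  | .var _ => ∅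
  | .le s s' => {(s, s')}
  | .tru => ∅
  | .fls => ∅
  | .neg a => leSubs a
  | .conj a b => leSubs a ∪ leSubs b
  | .dia _ a => leSubs a
  | .box _ a => leSubs a
  | .next a => leSubs a
  | .until_ a b => leSubs a ∪ leSubs b

/-- `φ[I⁺ ↦ ⊤, I⁻ ↦ ⊥]`: replace each subformula `s ≼ s'` with `(s,s') ∈ P`
by `⊤` and each with `(s,s') ∈ N` by `⊥`. -/
def substLe (P N : Finset (ℕ × ℕ)) : SForm → SForm
  | .var p => .var p
  | .le s s' => if (s, s') ∈ P then .tru else if (s, s') ∈ N then .fls else .le s s'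
  | .tru => .tru
  | .fls => .fls
  | .neg a => .neg (substLe P N a)
  | .conj a b => .conj (substLe P N a) (substLe P N b)
  | .dia s a => .dia s (substLe P N a)
  | .box s a => .box s (substLe P N a)
  | .next a => .next (substLe P N a)
  | .until_ a b => .until_ (substLe P N a) (substLe P N b)

/-- `ψ_D := G( ⋀_{(s≼s')∈I⁺} (s ≼ s') ∧ ⋀_{(s≼s')∈I⁻} (◇_s p_{s,s'} ∧ ¬◇_{s'} p_{s,s'}) )`,
where `pv (s,s')` is the fresh variable `p_{s,s'}`. -/
noncomputable def psiD (P N : Finset (ℕ × ℕ)) (pv : ℕ × ℕ → ℕ) : SForm :=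
  SForm.G (.conj
    (bigAnd (P.toList.map (fun pr => SForm.le pr.1 pr.2)))
    (bigAnd (N.toList.map (fun pr =>
      SForm.conj (.dia pr.1 (.var (pv pr))) (.neg (.dia pr.2 (.var (pv pr))))))))

/-- `φ_D := φ[I⁺ ↦ ⊤, I⁻ ↦ ⊥] ∧ ψ_D`. -/
noncomputable def phiD (φ : SForm) (P N : Finset (ℕ × ℕ)) (pv : ℕ × ℕ → ℕ) : SForm :=
  .conj (substLe P N φ) (psiD P N pv)

lemma bigAnd_iff (M : SLTLModel) (l : List SForm) (σ : Trace) (i : ℕ) :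
    SSat M (bigAnd l) σ i ↔ ∀ a ∈ l, SSat M a σ i := by
  induction l with
  | nil => simp [bigAnd, SSat]
  | cons a l ih =>
    show SSat M (.conj a (bigAnd l)) σ i ↔ _
    simp only [SSat, ih, List.mem_cons]
    constructor
    · rintro ⟨h1, h2⟩ b hb
      rcases hb with rfl | hb
      · exact h1
      · exact h2 b hb
    · intro h
      exact ⟨h a (Or.inl rfl), fun b hb => h b (Or.inr hb)⟩

lemma G_iff (M : SLTLModel) (a : SForm) (σ : Trace) (i : ℕ) :
    SSat M (SForm.G a) σ i ↔ ∀ j, i ≤ j → SSat M a σ j := by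
  simp only [SForm.G, SSat]
  push_neg
  constructor
  · intro h j hj
    by_contra hc
    obtain ⟨_, _, _, hf⟩ := h j hj hc
    exact hf
  · intro h i' h1 h2
    exact absurd (h i' h1) h2

/-- An LTL∨PSL formula `φ` is SLTL-satisfiable iff there is a
partition `D = (I⁺, I⁻)` of the set `I` of subformulae of `φ` of the form
`s ≼ s'` such that `φ_D` is SLTL-satisfiable (the variables `p_{s,s'}` are
fresh and pairwise distinct). -/
theorem stmt3 (φ : SForm) (pv : ℕ × ℕ → ℕ) (hφ : isLTLPSL φ)
    (hinj : Function.Injective pv) (hfresh : ∀ pr, pv pr ∉ varsSF φ) :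
    SLTLSatisfiable φ ↔
      ∃ P N : Finset (ℕ × ℕ), P ∪ N = leSubs φ ∧ Disjoint P N ∧
        SLTLSatisfiable (phiD φ P N pv) := by
  classical
  constructor
  · rintro ⟨M, σ, hσ, hsat⟩
    set P : Finset (ℕ × ℕ) := (leSubs φ).filter (fun pr => M.lam pr.1 ⊆ M.lam pr.2) with hPdef
    set N : Finset (ℕ × ℕ) :=
      (leSubs φ).filter (fun pr => ¬ M.lam pr.1 ⊆ M.lam pr.2) with hNdef
    have hPmem : ∀ pr ∈ leSubs φ, M.lam pr.1 ⊆ M.lam pr.2 → pr ∈ P := by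
      intro pr h1 h2; simp [hPdef, Finset.mem_filter, h1, h2]
    have hNmem : ∀ pr ∈ leSubs φ, ¬ M.lam pr.1 ⊆ M.lam pr.2 → pr ∈ N := by
      intro pr h1 h2; simp [hNdef, Finset.mem_filter, h1, h2]
    have hPsub : ∀ pr ∈ P, M.lam pr.1 ⊆ M.lam pr.2 := fun pr h => (Finset.mem_filter.mp h).2
    have hNsub : ∀ pr ∈ N, ¬ M.lam pr.1 ⊆ M.lam pr.2 := fun pr h => (Finset.mem_filter.mp h).2
    refine ⟨P, N, Finset.filter_union_filter_not_eq _ _,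
      Finset.disjoint_filter_filter_not _ _ _, ?_⟩
    have hwit : ∀ pr : ℕ × ℕ, ¬ M.lam pr.1 ⊆ M.lam pr.2 →
        ∃ τ, τ ∈ M.lam pr.1 ∧ τ ∉ M.lam pr.2 := by
      intro pr h; exact Set.not_subset.mp h
    set w : ℕ × ℕ → Trace := fun pr =>
      if h : ∃ τ, τ ∈ M.lam pr.1 ∧ τ ∉ M.lam pr.2 then h.choose else σ with hwdef
    have hw : ∀ pr ∈ N, w pr ∈ M.lam pr.1 ∧ w pr ∉ M.lam pr.2 := by
      intro pr h
      have he := hwit pr (hNsub pr h)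
      simp only [hwdef, dif_pos he]
      exact he.choose_spec
    set Gm : Trace → Trace := fun τ i =>
      (τ i \ Set.range pv) ∪ (pv '' {pr : ℕ × ℕ | pr ∈ N ∧ τ = w pr}) with hGmdef
    have hmem1 : ∀ τ (i : ℕ) (p : ℕ), p ∉ Set.range pv → (p ∈ Gm τ i ↔ p ∈ τ i) := by
      intro τ i p hp
      simp only [hGmdef, Set.mem_union, Set.mem_diff, Set.mem_image, Set.mem_setOf_eq]
      constructor
      · rintro (⟨h, _⟩ | ⟨pr, _, rfl⟩)
        · exact h
        · exact absurd ⟨pr, rfl⟩ hp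
      · intro h; exact Or.inl ⟨h, hp⟩
    have hmem2 : ∀ τ (i : ℕ) (pr : ℕ × ℕ), pv pr ∈ Gm τ i ↔ pr ∈ N ∧ τ = w pr := by
      intro τ i pr
      simp only [hGmdef, Set.mem_union, Set.mem_diff, Set.mem_image, Set.mem_setOf_eq,
        Set.mem_range]
      constructor
      · rintro (⟨_, h⟩ | ⟨pr', hpr', heq⟩)
        · exact absurd ⟨pr, rfl⟩ h
        · obtain rfl := hinj heq
          exact hpr'
      · intro h; exact Or.inr ⟨pr, h, rfl⟩
    set M' : SLTLModel :=
      { Pi := Gm '' M.Pi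
        lam := fun s => Gm '' M.lam s
        pi_nonempty := M.pi_nonempty.image _
        lam_sub := fun s => Set.image_mono (M.lam_sub s)
        lam_nonempty := fun s => (M.lam_nonempty s).image _
        lam_star := by show Gm '' M.lam 0 = Gm '' M.Pi; rw [M.lam_star] } with hM'def
    have hlam : ∀ s, M'.lam s = Gm '' M.lam s := fun _ => rfl
    have key : ∀ a : SForm, (∀ p ∈ varsSF a, p ∉ Set.range pv) → (leSubs a ⊆ leSubs φ) →
        ∀ τ i, SSat M a τ i ↔ SSat M' (substLe P N a) (Gm τ) i := by
      intro a
      induction a with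
      | var p =>
        intro hv _ τ i
        simp only [SSat, substLe]
        exact (hmem1 τ i p (hv p (by simp [varsSF]))).symm
      | le s s' =>
        intro _ hle τ i
        have hmem : (s, s') ∈ leSubs φ := hle (by simp [leSubs])
        by_cases hss : M.lam s ⊆ M.lam s'
        · have hp : (s, s') ∈ P := hPmem _ hmem hss
          simp only [substLe, if_pos hp, SSat]
          exact iff_of_true hss trivial
        · have hnp : (s, s') ∉ P := fun h => hss (hPsub _ h)
          have hn : (s, s') ∈ N := hNmem _ hmem hss
          simp only [substLe, if_neg hnp, if_pos hn, SSat]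
          exact iff_of_false hss (fun h => h)
      | tru => intro _ _ τ i; simp [SSat, substLe]
      | fls => intro _ _ τ i; simp [SSat, substLe]
      | neg a ih =>
        intro hv hle τ i
        simp only [SSat, substLe]
        rw [ih hv hle τ i]
      | conj a b iha ihb =>
        intro hv hle τ i
        have hva : ∀ p ∈ varsSF a, p ∉ Set.range pv := fun p hp =>
          hv p (by simp [varsSF, hp])
        have hvb : ∀ p ∈ varsSF b, p ∉ Set.range pv := fun p hp =>
          hv p (by simp [varsSF, hp])
        have hlea : leSubs a ⊆ leSubs φ := fun x hx => hle (by simp [leSubs, hx])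
        have hleb : leSubs b ⊆ leSubs φ := fun x hx => hle (by simp [leSubs, hx])
        simp only [SSat, substLe]
        rw [iha hva hlea τ i, ihb hvb hleb τ i]
      | dia s a ih =>
        intro hv hle τ i
        simp only [SSat, substLe, hlam]
        constructor
        · rintro ⟨σ', hσ', h⟩
          exact ⟨Gm σ', ⟨σ', hσ', rfl⟩, (ih hv hle σ' i).mp h⟩
        · rintro ⟨_, ⟨σ', hσ', rfl⟩, h⟩
          exact ⟨σ', hσ', (ih hv hle σ' i).mpr h⟩
      | box s a ih =>
        intro hv hle τ i
        simp only [SSat, substLe, hlam]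
        constructor
        · rintro h _ ⟨σ', hσ', rfl⟩
          exact (ih hv hle σ' i).mp (h σ' hσ')
        · intro h σ' hσ'
          exact (ih hv hle σ' i).mpr (h _ ⟨σ', hσ', rfl⟩)
      | next a ih =>
        intro hv hle τ i
        simp only [SSat, substLe]
        exact ih hv hle τ (i + 1)
      | until_ a b iha ihb =>
        intro hv hle τ i
        have hva : ∀ p ∈ varsSF a, p ∉ Set.range pv := fun p hp =>
          hv p (by simp [varsSF, hp])
        have hvb : ∀ p ∈ varsSF b, p ∉ Set.range pv := fun p hp =>
          hv p (by simp [varsSF, hp])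
        have hlea : leSubs a ⊆ leSubs φ := fun x hx => hle (by simp [leSubs, hx])
        have hleb : leSubs b ⊆ leSubs φ := fun x hx => hle (by simp [leSubs, hx])
        simp only [SSat, substLe]
        constructor
        · rintro ⟨i', h1, h2, h3⟩
          exact ⟨i', h1, (ihb hvb hleb τ i').mp h2,
            fun i'' ha hb => (iha hva hlea τ i'').mp (h3 i'' ha hb)⟩
        · rintro ⟨i', h1, h2, h3⟩
          exact ⟨i', h1, (ihb hvb hleb τ i').mpr h2,
            fun i'' ha hb => (iha hva hlea τ i'').mpr (h3 i'' ha hb)⟩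
    have hvφ : ∀ p ∈ varsSF φ, p ∉ Set.range pv := by
      rintro p hp ⟨pr, rfl⟩
      exact hfresh pr hp
    refine ⟨M', Gm σ, ⟨σ, hσ, rfl⟩, ?_⟩
    show SSat M' (.conj (substLe P N φ) (psiD P N pv)) (Gm σ) 0
    refine ⟨(key φ hvφ (subset_refl _) σ 0).mp hsat, ?_⟩
    show SSat M' (SForm.G _) (Gm σ) 0
    rw [G_iff]
    intro j _
    constructor
    · rw [bigAnd_iff]
      intro a ha
      obtain ⟨pr, hpr, rfl⟩ := List.mem_map.mp ha
      have hprP : pr ∈ P := Finset.mem_toList.mp hpr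
      show M'.lam pr.1 ⊆ M'.lam pr.2
      rw [hlam, hlam]
      exact Set.image_mono (hPsub pr hprP)
    · rw [bigAnd_iff]
      intro a ha
      obtain ⟨pr, hpr, rfl⟩ := List.mem_map.mp ha
      have hprN : pr ∈ N := Finset.mem_toList.mp hpr
      constructor
      · exact ⟨Gm (w pr), ⟨w pr, (hw pr hprN).1, rfl⟩,
          (hmem2 (w pr) j pr).mpr ⟨hprN, rfl⟩⟩
      · rintro ⟨_, ⟨τ, hτ, rfl⟩, hmemv⟩
        obtain ⟨_, rfl⟩ := (hmem2 τ j pr).mp hmemv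
        exact (hw pr hprN).2 hτ
  · rintro ⟨P, N, hUN, hDisj, M, σ, hσ, hsat⟩
    obtain ⟨h1, h2⟩ : SSat M (substLe P N φ) σ 0 ∧ SSat M (psiD P N pv) σ 0 := hsat
    have h2' : SSat M (SForm.G _) σ 0 := h2
    rw [G_iff] at h2'
    obtain ⟨hA, hB⟩ := h2' 0 le_rfl
    rw [bigAnd_iff] at hA hB
    have hP : ∀ pr ∈ P, M.lam pr.1 ⊆ M.lam pr.2 := by
      intro pr hpr
      exact hA _ (List.mem_map.mpr ⟨pr, Finset.mem_toList.mpr hpr, rfl⟩)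
    have hN : ∀ pr ∈ N, ¬ M.lam pr.1 ⊆ M.lam pr.2 := by
      intro pr hpr hsub
      have h := hB _ (List.mem_map.mpr ⟨pr, Finset.mem_toList.mpr hpr, rfl⟩)
      obtain ⟨⟨τ, hτ1, hτv⟩, hneg⟩ := h
      exact hneg ⟨τ, hsub hτ1, hτv⟩
    have key2 : ∀ a : SForm, leSubs a ⊆ leSubs φ →
        ∀ τ i, SSat M (substLe P N a) τ i ↔ SSat M a τ i := by
      intro a
      induction a with
      | var p => intro _ τ i; simp [SSat, substLe]
      | le s s' =>
        intro hle τ i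
        have hmem : (s, s') ∈ P ∪ N := by rw [hUN]; exact hle (by simp [leSubs])
        by_cases hp : (s, s') ∈ P
        · simp only [substLe, if_pos hp, SSat]
          exact iff_of_true trivial (hP _ hp)
        · have hn : (s, s') ∈ N := (Finset.mem_union.mp hmem).resolve_left hp
          simp only [substLe, if_neg hp, if_pos hn, SSat]
          exact iff_of_false (fun h => h) (hN _ hn)
      | tru => intro _ τ i; simp [SSat, substLe]
      | fls => intro _ τ i; simp [SSat, substLe]
      | neg a ih =>
        intro hle τ i
        simp only [SSat, substLe]
        rw [ih hle τ i]
      | conj a b iha ihb =>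
        intro hle τ i
        have hlea : leSubs a ⊆ leSubs φ := fun x hx => hle (by simp [leSubs, hx])
        have hleb : leSubs b ⊆ leSubs φ := fun x hx => hle (by simp [leSubs, hx])
        simp only [SSat, substLe]
        rw [iha hlea τ i, ihb hleb τ i]
      | dia s a ih =>
        intro hle τ i
        simp only [SSat, substLe]
        constructor
        · rintro ⟨σ', hσ', h⟩
          exact ⟨σ', hσ', (ih hle σ' i).mp h⟩
        · rintro ⟨σ', hσ', h⟩
          exact ⟨σ', hσ', (ih hle σ' i).mpr h⟩
      | box s a ih =>
        intro hle τ i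
        simp only [SSat, substLe]
        constructor
        · intro h σ' hσ'
          exact (ih hle σ' i).mp (h σ' hσ')
        · intro h σ' hσ'
          exact (ih hle σ' i).mpr (h σ' hσ')
      | next a ih =>
        intro hle τ i
        simp only [SSat, substLe]
        exact ih hle τ (i + 1)
      | until_ a b iha ihb =>
        intro hle τ i
        have hlea : leSubs a ⊆ leSubs φ := fun x hx => hle (by simp [leSubs, hx])
        have hleb : leSubs b ⊆ leSubs φ := fun x hx => hle (by simp [leSubs, hx])
        simp only [SSat, substLe]
        constructor
        · rintro ⟨i', ha, hb, hc⟩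
          exact ⟨i', ha, (ihb hleb τ i').mp hb,
            fun i'' h1 h2 => (iha hlea τ i'').mp (hc i'' h1 h2)⟩
        · rintro ⟨i', ha, hb, hc⟩
          exact ⟨i', ha, (ihb hleb τ i').mpr hb,
            fun i'' h1 h2 => (iha hlea τ i'').mpr (hc i'' h1 h2)⟩
    exact ⟨M, σ, hσ, (key2 φ (subset_refl _) σ 0).mp h1⟩
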